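/- When treatment is absorbing, for any two waves i ≤ t ≤ w̄ the immediate-complier events coincide pointwise: {ω : T_i(1)(ω) ≥ i > T_i(0)(ω)} = {ω : T_t(1)(ω) ≥ t > T_t(0)(ω)}; in particular π_{t,t} = π_{1,1} for every wave t. -/
import Mathlib


open MeasureTheory ProbabilityTheory Finset

/-- Conditional mean `E[X | A]`: the expectation of `X` under `P` conditioned on the event `A`. -/
noncomputable def cmean {Ω : Type*} [MeasurableSpace Ω] (P : MeasureTheory.Measure Ω)
    (A : Set Ω) (X : Ω → ℝ) : ℝ :=
  ∫ ω, X ω ∂(P[|A])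

theorem immediate_complier_events_coincide
    {Ω : Type*} [MeasurableSpace Ω] (P : MeasureTheory.Measure Ω) [IsProbabilityMeasure P]
    (wbar : ℕ) (hwbar : 1 ≤ wbar)
    (T : ℕ → ℕ → Ω → ℕ) (hTmeas : ∀ w z, Measurable (T w z))
    (hTrange : ∀ w ∈ Set.Icc 1 wbar, ∀ z ≤ 1, ∀ ω, T w z ω ≤ w)
    (hAbs : ∀ z ≤ 1, ∀ w, 1 ≤ w → w < wbar → ∀ ω,
      (1 ≤ T w z ω → T (w + 1) z ω = T w z ω + 1) ∧
      (T w z ω = 0 → T (w + 1) z ω ≤ 1)) :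
    (∀ i t, 1 ≤ i → i ≤ t → t ≤ wbar →
      {ω | T i 0 ω < i ∧ i ≤ T i 1 ω} = {ω | T t 0 ω < t ∧ t ≤ T t 1 ω}) ∧
    (∀ t ∈ Set.Icc 1 wbar,
      P {ω | T t 0 ω < t ∧ t ≤ T t 1 ω} = P {ω | T 1 0 ω < 1 ∧ 1 ≤ T 1 1 ω}) := by
  have key : ∀ w, 1 ≤ w → w < wbar →
      {ω | T w 0 ω < w ∧ w ≤ T w 1 ω} =
      {ω | T (w+1) 0 ω < (w+1) ∧ (w+1) ≤ T (w+1) 1 ω} := by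
    intro w hw1 hww
    ext ω
    simp only [Set.mem_setOf_eq]
    constructor
    · rintro ⟨h0, h1⟩
      have hT1 : 1 ≤ T w 1 ω := le_trans hw1 h1
      have e1 := (hAbs 1 le_rfl w hw1 hww ω).1 hT1
      refine ⟨?_, by omega⟩
      rcases Nat.eq_zero_or_pos (T w 0 ω) with h | h
      · have := (hAbs 0 (by norm_num) w hw1 hww ω).2 h
        omega
      · have := (hAbs 0 (by norm_num) w hw1 hww ω).1 h
        omega
    · rintro ⟨h0, h1⟩
      have hr1 : T w 1 ω ≤ w := hTrange w ⟨hw1, le_of_lt hww⟩ 1 le_rfl ω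
      have hr0 : T w 0 ω ≤ w := hTrange w ⟨hw1, le_of_lt hww⟩ 0 (by norm_num) ω
      constructor
      · by_contra h
        have h1' : 1 ≤ T w 0 ω := by omega
        have := (hAbs 0 (by norm_num) w hw1 hww ω).1 h1'
        omega
      · rcases Nat.eq_zero_or_pos (T w 1 ω) with h | h
        · have := (hAbs 1 le_rfl w hw1 hww ω).2 h
          omega
        · have := (hAbs 1 le_rfl w hw1 hww ω).1 h
          omega
  have toOne : ∀ t, 1 ≤ t → t ≤ wbar →
      {ω | T t 0 ω < t ∧ t ≤ T t 1 ω} = {ω | T 1 0 ω < 1 ∧ 1 ≤ T 1 1 ω} := by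
    intro t
    induction t with
    | zero => omega
    | succ n ih =>
      intro h1 h2
      rcases Nat.eq_zero_or_pos n with hn | hn
      · subst hn; rfl
      · rw [← key n hn (by omega)]
        exact ih hn (by omega)
  refine ⟨fun i t hi hit ht => ?_, fun t ht => ?_⟩
  · rw [toOne i hi (le_trans hit ht), toOne t (le_trans hi hit) ht]
  · rw [toOne t ht.1 ht.2]
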